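/- Let Q be an involutory quandle and a,b ∈ Q. The subquandle Sg(a,b) is connected if and only if ord_{a,b} is finite and odd; in that case Sg(a,b) is a finite latin quandle of odd order, isomorphic to Aff(ℤ_{2m+1}, -1) for some m. -/

import Mathlib

/-- A left quasigroup: left multiplications are bijective. -/
class LQgrp (Q : Type*) where
  mul : Q → Q → Q
  ld : Q → Q → Q
  ld_mul : ∀ x y, ld x (mul x y) = y
  mul_ld : ∀ x y, mul x (ld x y) = y

namespace LQgrp

variable {Q : Type*} [LQgrp Q]

/-- Left multiplication as a permutation. -/
def LM (a : Q) : Equiv.Perm Q := ⟨mul a, ld a, ld_mul a, mul_ld a⟩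

/-- The left multiplication group. -/
def LMlt (Q : Type*) [LQgrp Q] : Subgroup (Equiv.Perm Q) :=
  Subgroup.closure (Set.range (LM : Q → Equiv.Perm Q))

/-- Subalgebras: subsets closed under both operations. -/
def IsSubalg (S : Set Q) : Prop :=
  (∀ a ∈ S, ∀ b ∈ S, mul a b ∈ S) ∧ (∀ a ∈ S, ∀ b ∈ S, ld a b ∈ S)

/-- The subalgebra generated by a set. -/
def Sg (X : Set Q) : Set Q := ⋂₀ {S | IsSubalg S ∧ X ⊆ S}

/-- A subset is connected if the group generated by its left translations
acts transitively on it. -/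
def ConnectedSet (S : Set Q) : Prop :=
  ∀ a ∈ S, ∀ b ∈ S, ∃ h ∈ Subgroup.closure ((LM : Q → Equiv.Perm Q) '' S), h a = b

/-- `Q` is connected if `LMlt Q` acts transitively. -/
def Connected (Q : Type*) [LQgrp Q] : Prop := ∀ a b : Q, ∃ h ∈ LMlt Q, h a = b

/-- `Q` is superconnected if every subalgebra is connected. -/
def Superconnected (Q : Type*) [LQgrp Q] : Prop :=
  ∀ S : Set Q, IsSubalg S → ConnectedSet S

/-- Faithfulness of a subalgebra: distinct elements have distinct left translations. -/
def FaithfulOn (S : Set Q) : Prop :=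
  ∀ a ∈ S, ∀ b ∈ S, (∀ c ∈ S, mul a c = mul b c) → a = b

/-- `Q` is superfaithful if every subalgebra is faithful. -/
def Superfaithful (Q : Type*) [LQgrp Q] : Prop :=
  ∀ S : Set Q, IsSubalg S → FaithfulOn S

/-- Latin: right multiplications are bijective. -/
def Latin (Q : Type*) [LQgrp Q] : Prop := ∀ a : Q, Function.Bijective (fun b => mul b a)

/-- The displacement group of a rack/quandle. -/
def Dis (Q : Type*) [LQgrp Q] : Subgroup (Equiv.Perm Q) :=
  Subgroup.closure {g : Equiv.Perm Q | ∃ a b : Q, g = LM a * (LM b)⁻¹}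

end LQgrp

/-- A quandle: idempotent, left distributive left quasigroup. -/
class Qdl (Q : Type*) extends LQgrp Q where
  idem : ∀ x : Q, mul x x = x
  ldist : ∀ x y z : Q, mul x (mul y z) = mul (mul x y) (mul x z)

/-- An involutory quandle. -/
class InvQdl (Q : Type*) extends Qdl Q where
  invol : ∀ x y : Q, mul x (mul x y) = y

open LQgrp

/-- The cycle element `a^k`: `a^{2i} = (L_a L_b)^i(b)` and `a^{2i+1} = (L_a L_b)^i(a)`. -/
def cyc {Q : Type*} [LQgrp Q] (a b : Q) (k : ℕ) : Q :=
  if k % 2 = 0 then ((LM a * LM b) ^ (k / 2)) b else ((LM a * LM b) ^ (k / 2)) a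

namespace Aux17
variable {Q : Type*} [InvQdl Q]

lemma ld_eq (x y : Q) : ld x y = mul x y := by
  conv_lhs => rw [← InvQdl.invol x y, ld_mul]

lemma LM_apply (c x : Q) : LM c x = mul c x := rfl

lemma LM_sq (c : Q) : LM c * LM c = 1 := Equiv.ext fun x => InvQdl.invol c x

lemma LM_inv (c : Q) : (LM c)⁻¹ = LM c :=
  inv_eq_of_mul_eq_one_right (LM_sq c)

lemma LM_mulq (c d : Q) : LM (mul c d) = LM c * LM d * LM c := Equiv.ext fun x => by
  show mul (mul c d) x = mul c (mul d (mul c x))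
  rw [Qdl.ldist c d (mul c x), InvQdl.invol]

variable (a b : Q)

/-- g = L_a L_b -/
def g : Equiv.Perm Q := LM a * LM b

/-- e n : the dihedral sequence. e(2i)=g^i b, e(2i+1)=g^i a. -/
def e (n : ℤ) : Q := ((g a b) ^ (n / 2)) (if Even n then b else a)

lemma e_even (i : ℤ) : e a b (2*i) = ((g a b) ^ i) b := by
  unfold e
  rw [if_pos ⟨i, two_mul i⟩, Int.mul_ediv_cancel_left _ two_ne_zero]

lemma e_odd (i : ℤ) : e a b (2*i+1) = ((g a b) ^ i) a := by
  unfold e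
  have h2 : (2*i+1) / 2 = i := by omega
  rw [if_neg (by simp [Int.even_add_one, parity_simps]), h2]

lemma e_zero : e a b 0 = b := by simpa using e_even a b 0
lemma e_one : e a b 1 = a := by simpa using e_odd a b 0


lemma g_inv : (g a b)⁻¹ = LM b * LM a := by
  rw [g, mul_inv_rev, LM_inv, LM_inv]

lemma Mg : LM b * (g a b) * (LM b)⁻¹ = (g a b)⁻¹ := by
  rw [g_inv, g, LM_inv]
  group
  rw [mul_assoc (LM b * LM a) (LM b) (LM b), LM_sq, mul_one]

lemma Mg_zpow (i : ℤ) : LM b * (g a b) ^ i = (g a b) ^ (-i) * LM b := by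
  have := conj_zpow (i := i) (a := LM b) (b := g a b)
  rw [Mg, inv_zpow, ← zpow_neg] at this
  calc LM b * (g a b) ^ i = (LM b * (g a b) ^ i * (LM b)⁻¹) * LM b := by group
  _ = _ := by rw [this]

lemma Lg : LM a * (g a b) * (LM a)⁻¹ = (g a b)⁻¹ := by
  rw [g_inv, g, LM_inv]
  group
  rw [LM_sq, one_mul]

lemma Lg_zpow (i : ℤ) : LM a * (g a b) ^ i = (g a b) ^ (-i) * LM a := by
  have := conj_zpow (i := i) (a := LM a) (b := g a b)
  rw [Lg, inv_zpow, ← zpow_neg] at this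
  calc LM a * (g a b) ^ i = (LM a * (g a b) ^ i * (LM a)⁻¹) * LM a := by group
  _ = _ := by rw [this]

lemma e_neg (n : ℤ) : e a b (-n) = LM b (e a b n) := by
  rcases Int.even_or_odd n with ⟨i, hi⟩ | ⟨i, hi⟩
  · subst hi
    have h1 : -(i + i) = 2 * (-i) := by ring
    have h2 : (i + i) = 2 * i := by ring
    rw [h1, h2, e_even, e_even, ← Equiv.Perm.mul_apply, Mg_zpow]
    simp [LM_apply, Qdl.idem]
  · subst hi
    have h1 : -(2*i + 1) = 2 * (-i-1) + 1 := by ring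
    rw [h1, e_odd, e_odd, ← Equiv.Perm.mul_apply]
    have hga : (g a b)⁻¹ * LM a = LM b := by
      rw [g_inv, mul_assoc, LM_sq, mul_one]
    have key : (g a b) ^ (-i-1) * LM a = LM b * (g a b) ^ i := by
      rw [sub_eq_add_neg, zpow_add, zpow_neg_one, mul_assoc, hga, (Mg_zpow a b i).symm]
    rw [← key]
    simp [Equiv.Perm.mul_apply, LM_apply, Qdl.idem]

lemma e_add_two (n : ℤ) : e a b (n + 2) = g a b (e a b n) := by
  rcases Int.even_or_odd n with ⟨i, hi⟩ | ⟨i, hi⟩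
  · subst hi
    have h1 : i + i + 2 = 2 * (i+1) := by ring
    have h2 : i + i = 2 * i := by ring
    rw [h1, h2, e_even, e_even, add_comm i 1, zpow_add, zpow_one, Equiv.Perm.mul_apply]
  · subst hi
    have h1 : 2*i + 1 + 2 = 2 * (i+1) + 1 := by ring
    rw [h1, e_odd, e_odd, add_comm i 1, zpow_add, zpow_one, Equiv.Perm.mul_apply]

lemma g_act (k n : ℤ) : ((g a b) ^ k) (e a b n) = e a b (n + 2 * k) := by
  induction k using Int.induction_on with
  | zero => simp
  | succ i ih =>
      have h1 : n + 2 * ((i:ℤ) + 1) = (n + 2*i) + 2 := by ring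
      have h2 : (g a b) ^ ((i:ℤ)+1) = g a b * (g a b) ^ (i:ℤ) := by
        rw [add_comm, zpow_add, zpow_one]
      rw [h1, e_add_two, ← ih, h2, Equiv.Perm.mul_apply]
  | pred i ih =>
      apply (g a b).injective
      rw [← Equiv.Perm.mul_apply]
      have h2 : g a b * (g a b) ^ (-(i:ℤ)-1) = (g a b) ^ (-(i:ℤ)) := by
        rw [sub_eq_add_neg, zpow_add, zpow_neg_one]
        group
      rw [h2, ih, ← e_add_two]
      congr 1
      ring

lemma LM_g_one (x : Q) : LM (g a b x) = g a b * LM x * (g a b)⁻¹ := by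
  have hx : g a b x = mul a (mul b x) := rfl
  rw [hx, LM_mulq, LM_mulq, g, mul_inv_rev, LM_inv, LM_inv]
  group

lemma LM_g_zpow (i : ℤ) (x : Q) :
    LM (((g a b) ^ i) x) = (g a b) ^ i * LM x * (g a b) ^ (-i) := by
  induction i using Int.induction_on with
  | zero => simp
  | succ i ih =>
      have h2 : (g a b) ^ ((i:ℤ)+1) = g a b * (g a b) ^ (i:ℤ) := by
        rw [add_comm, zpow_add, zpow_one]
      rw [h2, Equiv.Perm.mul_apply, LM_g_one, ih]
      rw [show -((i:ℤ)+1) = -(i:ℤ) + -1 by ring, zpow_add, zpow_neg_one]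
      group
  | pred i ih =>
      have h3 := LM_g_one a b (((g a b) ^ (-(i:ℤ)-1)) x)
      have h2 : g a b * (g a b) ^ (-(i:ℤ)-1) = (g a b) ^ (-(i:ℤ)) := by group
      rw [← Equiv.Perm.mul_apply, h2, ih] at h3
      have h4 : LM (((g a b) ^ (-(i:ℤ)-1)) x)
          = (g a b)⁻¹ * ((g a b) ^ (-(i:ℤ)) * LM x * (g a b) ^ (-(-(i:ℤ)))) * g a b := by
        rw [h3]; group
      rw [h4]; group

lemma g_mul_LMb : g a b * LM b = LM a := by
  rw [g, mul_assoc, LM_sq, mul_one]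

lemma LM_e (n : ℤ) : LM (e a b n) = (g a b) ^ n * LM b := by
  rcases Int.even_or_odd n with ⟨i, hi⟩ | ⟨i, hi⟩
  · have h : n = 2 * i := by omega
    subst h
    rw [e_even, LM_g_zpow]
    have : LM b * (g a b) ^ (-i) = (g a b) ^ i * LM b := by
      rw [Mg_zpow, neg_neg]
    rw [mul_assoc, this, ← mul_assoc, ← zpow_add, two_mul]
  · have h : n = 2 * i + 1 := by omega
    subst h
    rw [e_odd, LM_g_zpow]
    have : LM a * (g a b) ^ (-i) = (g a b) ^ i * LM a := by
      rw [Lg_zpow, neg_neg]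
    rw [mul_assoc, this, ← mul_assoc, ← g_mul_LMb a b]
    group

lemma e_mul (x y : ℤ) : mul (e a b x) (e a b y) = e a b (2*x - y) := by
  have h1 : mul (e a b x) (e a b y) = LM (e a b x) (e a b y) := rfl
  rw [h1, LM_e, Equiv.Perm.mul_apply, ← e_neg, g_act]
  congr 1
  ring

end Aux17

namespace Aux17
variable {Q : Type*} [InvQdl Q]

lemma subset_Sg (X : Set Q) : X ⊆ Sg X := fun x hx =>
  Set.mem_sInter.2 fun _ hS => hS.2 hx

lemma Sg_le {X S : Set Q} (h1 : IsSubalg S) (h2 : X ⊆ S) : Sg X ⊆ S :=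
  fun _ hx => Set.mem_sInter.1 hx S ⟨h1, h2⟩

lemma Sg_subalg (X : Set Q) : IsSubalg (Sg X) := by
  constructor
  · intro c hc d hd
    exact Set.mem_sInter.2 fun S hS =>
      hS.1.1 c (Set.mem_sInter.1 hc S hS) d (Set.mem_sInter.1 hd S hS)
  · intro c hc d hd
    exact Set.mem_sInter.2 fun S hS =>
      hS.1.2 c (Set.mem_sInter.1 hc S hS) d (Set.mem_sInter.1 hd S hS)

variable (a b : Q)

lemma g_def : g a b = LM a * LM b := rfl

lemma isSubalg_range_e : IsSubalg (Set.range (e a b)) := by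
  constructor
  · rintro _ ⟨n, rfl⟩ _ ⟨m, rfl⟩
    exact ⟨2*n - m, (e_mul a b n m).symm⟩
  · rintro _ ⟨n, rfl⟩ _ ⟨m, rfl⟩
    rw [ld_eq]
    exact ⟨2*n - m, (e_mul a b n m).symm⟩

lemma e_mem_Sg (n : ℤ) : e a b n ∈ Sg {a, b} := by
  have ha : a ∈ Sg {a, b} := subset_Sg _ (Set.mem_insert _ _)
  have hb : b ∈ Sg {a, b} := subset_Sg _ (Set.mem_insert_of_mem _ rfl)
  have hmul := (Sg_subalg ({a, b} : Set Q)).1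
  have key : ∀ n : ℤ, e a b n ∈ Sg {a, b} ∧ e a b (n+1) ∈ Sg {a, b} := by
    intro n
    induction n using Int.induction_on with
    | zero => exact ⟨by rw [e_zero]; exact hb, by rw [zero_add, e_one]; exact ha⟩
    | succ i ih =>
        refine ⟨ih.2, ?_⟩
        have h1 : ((i:ℤ)+1) + 1 = 2*((i:ℤ)+1) - (i:ℤ) := by ring
        rw [h1, ← e_mul]
        exact hmul _ ih.2 _ ih.1
    | pred i ih =>
        refine ⟨?_, by rw [sub_add_cancel]; exact ih.1⟩
        have h1 : -(i:ℤ) - 1 = 2*(-(i:ℤ)) - (-(i:ℤ)+1) := by ring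
        rw [h1, ← e_mul]
        exact hmul _ ih.1 _ ih.2
  exact (key n).1

lemma Sg_pair_eq_range : Sg {a, b} = Set.range (e a b) := by
  apply subset_antisymm
  · apply Sg_le (isSubalg_range_e a b)
    intro x hx
    simp only [Set.mem_insert_iff, Set.mem_singleton_iff] at hx
    rcases hx with h | h
    · exact ⟨1, by rw [e_one, h]⟩
    · exact ⟨0, by rw [e_zero, h]⟩
  · rintro _ ⟨n, rfl⟩
    exact e_mem_Sg a b n

lemma cyc_eq_e (k : ℕ) : cyc a b k = e a b (k : ℤ) := by
  rcases Nat.even_or_odd k with ⟨i, hi⟩ | ⟨i, hi⟩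
  · subst hi
    unfold cyc
    rw [if_pos (by omega), show (i+i)/2 = i by omega]
    rw [show ((i+i : ℕ) : ℤ) = 2*(i:ℤ) by push_cast; ring, e_even, g_def, zpow_natCast]
  · subst hi
    unfold cyc
    rw [if_neg (by omega), show (2*i+1)/2 = i by omega]
    rw [show ((2*i+1 : ℕ) : ℤ) = 2*(i:ℤ)+1 by push_cast; ring, e_odd, g_def, zpow_natCast]

lemma g_zpow_eq_one {n : ℤ} (hn : e a b n = b) : (g a b) ^ n = 1 := by
  have h := LM_e a b n
  rw [hn] at h
  have h3 : (g a b) ^ n * LM b = 1 * LM b := by rw [one_mul]; exact h.symm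
  exact mul_right_cancel h3

lemma e_two_mul_of_gpow {k : ℤ} (h : (g a b) ^ k = 1) : e a b (2*k) = b := by
  rw [e_even, h, Equiv.Perm.one_apply]

lemma g_zpow_diff {n m : ℤ} (h : e a b n = e a b m) : (g a b) ^ (n - m) = 1 := by
  have h1 : (g a b)^n * LM b = (g a b)^m * LM b := by rw [← LM_e, ← LM_e, h]
  have h2 : (g a b)^n = (g a b)^m := mul_right_cancel h1
  rw [zpow_sub, h2, mul_inv_cancel]

end Aux17

namespace Aux17
variable {Q : Type*} [InvQdl Q] (a b : Q)

lemma T_add {n m : ℤ} (hn : e a b n = b) (hm : e a b m = b) : e a b (n + m) = b := by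
  have main : ∀ n m : ℤ, Even n → e a b n = b → e a b m = b → e a b (n + m) = b := by
    intro n m ⟨i, hi⟩ hn hm
    have hi' : n = 2*i := by omega
    subst hi'
    have hgi : ((g a b) ^ i) b = b := by rw [← e_even]; exact hn
    rw [add_comm, show m + 2*i = m + 2*i from rfl, ← g_act, hm, hgi]
  rcases Int.even_or_odd n with he | ho
  · exact main n m he hn hm
  · rcases Int.even_or_odd m with he' | ho'
    · rw [add_comm]; exact main m n he' hm hn
    · obtain ⟨i, hi⟩ := ho
      obtain ⟨j, hj⟩ := ho'
      subst hi; subst hj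
      have hni : ((g a b) ^ i) a = b := by rw [← e_odd]; exact hn
      have hmj : ((g a b) ^ j) a = b := by rw [← e_odd]; exact hm
      have hg1 : (g a b) ^ (2*j+1) = 1 := g_zpow_eq_one a b hm
      have key : ((g a b) ^ (i+j+1)) (((g a b) ^ j) a) = b := by
        rw [← Equiv.Perm.mul_apply, ← zpow_add,
          show i+j+1+j = i + (2*j+1) by ring, zpow_add, hg1, mul_one, hni]
      rw [hmj] at key
      rw [show 2*i+1 + (2*j+1) = 2*(i+j+1) by ring, e_even, key]

/-- There is a generator for the set of "periods". -/
lemma exists_gen : ∃ d : ℤ, ∀ n : ℤ, e a b n = b ↔ d ∣ n := by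
  let T : AddSubgroup ℤ :=
    { carrier := {n | e a b n = b}
      zero_mem' := e_zero a b
      add_mem' := fun hn hm => T_add a b hn hm
      neg_mem' := by
        intro n hn
        show e a b (-n) = b
        rw [e_neg, hn, LM_apply, Qdl.idem] }
  obtain ⟨d, hd⟩ := Int.subgroup_cyclic T
  refine ⟨d, fun n => ?_⟩
  have h1 : (e a b n = b) ↔ n ∈ T := Iff.rfl
  rw [h1, hd, AddSubgroup.mem_closure_singleton]
  constructor
  · rintro ⟨c, rfl⟩; exact ⟨c, by rw [zsmul_eq_mul]; push_cast; ring⟩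
  · rintro ⟨c, rfl⟩; exact ⟨c, by rw [zsmul_eq_mul]; push_cast; ring⟩

lemma e_period {t : ℤ} (hodd : Odd t) (hb : e a b t = b) (m : ℤ) :
    e a b (m + t) = e a b m := by
  obtain ⟨s, hs⟩ := hodd
  have hs' : t = 2*s + 1 := by omega
  subst hs'
  have hsa : ((g a b) ^ s) a = b := by rw [← e_odd]; exact hb
  have hg1 : (g a b) ^ (2*s+1) = 1 := g_zpow_eq_one a b hb
  rcases Int.even_or_odd m with ⟨j, hj⟩ | ⟨j, hj⟩
  · have hj' : m = 2*j := by omega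
    subst hj'
    rw [show 2*j + (2*s+1) = 2*(j+s)+1 by ring, e_odd, e_even]
    have key : ((g a b) ^ (j+s)) a = ((g a b) ^ j) (((g a b) ^ s) a) := by
      rw [← Equiv.Perm.mul_apply, ← zpow_add]
    rw [key, hsa]
  · subst hj
    rw [show 2*j+1 + (2*s+1) = 2*(j+s+1) by ring, e_even, e_odd]
    have key : ((g a b) ^ (j+s+1)) (((g a b) ^ s) a) = ((g a b) ^ j) a := by
      rw [← Equiv.Perm.mul_apply, ← zpow_add,
        show j+s+1+s = j + (2*s+1) by ring, zpow_add, hg1, mul_one]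
    rw [hsa] at key
    rw [key]

lemma e_period_mul {t : ℤ} (hodd : Odd t) (hb : e a b t = b) (c m : ℤ) :
    e a b (m + c * t) = e a b m := by
  induction c using Int.induction_on with
  | zero => simp
  | succ i ih =>
      rw [show m + ((i:ℤ)+1)*t = (m + i*t) + t by ring, e_period a b hodd hb, ih]
  | pred i ih =>
      have := e_period a b hodd hb (m + (-(i:ℤ)-1)*t)
      rw [show m + (-(i:ℤ)-1)*t + t = m + (-(i:ℤ))*t by ring, ih] at this
      exact this.symm

end Aux17

namespace Aux17
variable {Q : Type*} [InvQdl Q] (a b : Q)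

/-- The subgroup of permutations acting affinely on the e-sequence. -/
def K : Subgroup (Equiv.Perm Q) where
  carrier := {h | ∃ ε c : ℤ, (ε = 1 ∨ ε = -1) ∧
    ∀ n : ℤ, h (e a b n) = e a b (ε*n + 2*c)}
  one_mem' := ⟨1, 0, Or.inl rfl, fun n => by
    rw [Equiv.Perm.one_apply]; congr 1; ring⟩
  mul_mem' := by
    rintro h₁ h₂ ⟨ε₁, c₁, hε₁, H₁⟩ ⟨ε₂, c₂, hε₂, H₂⟩
    refine ⟨ε₁*ε₂, ε₁*c₂ + c₁, ?_, fun n => ?_⟩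
    · rcases hε₁ with rfl | rfl <;> rcases hε₂ with rfl | rfl <;> norm_num
    · rw [Equiv.Perm.mul_apply, H₂, H₁]; congr 1; ring
  inv_mem' := by
    rintro h ⟨ε, c, hε, H⟩
    refine ⟨ε, -(ε*c), hε, fun n => ?_⟩
    have hε2 : ε * ε = 1 := by rcases hε with rfl | rfl <;> norm_num
    have h1 := H (ε*n - 2*(ε*c))
    have h2 : ε * (ε*n - 2*(ε*c)) + 2*c = n := by
      have : ε * (ε*n - 2*(ε*c)) + 2*c = (ε*ε)*n - 2*(ε*ε)*c + 2*c := by ring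
      rw [this, hε2]; ring
    rw [h2] at h1
    calc h⁻¹ (e a b n) = h⁻¹ (h (e a b (ε*n - 2*(ε*c)))) := by rw [h1]
    _ = e a b (ε*n - 2*(ε*c)) := h.symm_apply_apply _
    _ = e a b (ε*n + 2*(-(ε*c))) := by congr 1; ring

lemma closure_le_K :
    Subgroup.closure ((LM : Q → Equiv.Perm Q) '' (Sg {a, b})) ≤ K a b := by
  rw [Subgroup.closure_le]
  rintro _ ⟨x, hx, rfl⟩
  rw [Sg_pair_eq_range] at hx
  obtain ⟨n, rfl⟩ := hx
  refine ⟨-1, n, Or.inr rfl, fun m => ?_⟩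
  rw [LM_apply, e_mul]
  congr 1
  ring

lemma g_mem_closure :
    g a b ∈ Subgroup.closure ((LM : Q → Equiv.Perm Q) '' (Sg {a, b})) := by
  have ha : a ∈ Sg ({a, b} : Set Q) := subset_Sg _ (Set.mem_insert _ _)
  have hb : b ∈ Sg ({a, b} : Set Q) := subset_Sg _ (Set.mem_insert_of_mem _ rfl)
  exact mul_mem (Subgroup.subset_closure ⟨a, ha, rfl⟩)
    (Subgroup.subset_closure ⟨b, hb, rfl⟩)

lemma conn_of_odd {t : ℤ} (hodd : Odd t) (hb : e a b t = b) :
    ConnectedSet (Sg ({a, b} : Set Q)) := by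
  intro x hx y hy
  rw [Sg_pair_eq_range] at hx hy
  obtain ⟨n, rfl⟩ := hx
  obtain ⟨m, rfl⟩ := hy
  rcases Int.even_or_odd (m - n) with ⟨c, hc⟩ | hodd2
  · refine ⟨(g a b) ^ c, zpow_mem (g_mem_closure a b) c, ?_⟩
    rw [g_act]
    congr 1
    omega
  · have : Even (m - t - n) := by
      obtain ⟨u, hu⟩ := hodd2
      obtain ⟨v, hv⟩ := hodd
      exact ⟨u - v, by omega⟩
    obtain ⟨c, hc⟩ := this
    refine ⟨(g a b) ^ c, zpow_mem (g_mem_closure a b) c, ?_⟩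
    rw [g_act]
    have h1 : n + 2*c = m - t := by omega
    rw [h1, show m - t = m + (-1) * t by ring, e_period_mul a b hodd hb]

lemma odd_of_conn (hconn : ConnectedSet (Sg ({a, b} : Set Q))) :
    ∃ t : ℤ, Odd t ∧ e a b t = b := by
  have ha : a ∈ Sg ({a, b} : Set Q) := subset_Sg _ (Set.mem_insert _ _)
  have hb : b ∈ Sg ({a, b} : Set Q) := subset_Sg _ (Set.mem_insert_of_mem _ rfl)
  obtain ⟨h, hmem, hba⟩ := hconn b hb a ha
  obtain ⟨ε, c, hε, H⟩ := closure_le_K a b hmem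
  have h0 := H 0
  rw [show ε * 0 + 2*c = 2*c by ring, e_zero, hba] at h0
  -- h0 : a = e a b (2*c)
  refine ⟨1 - 2*c, ⟨-c, by ring⟩, ?_⟩
  have h2 : e a b (2*c) = ((g a b) ^ c) b := e_even a b c
  have h3 : e a b (1 - 2*c) = ((g a b) ^ (-c)) (e a b 1) := by
    rw [g_act]; congr 1; ring
  rw [h3, e_one]
  nth_rewrite 2 [h0]
  rw [h2, ← Equiv.Perm.mul_apply, ← zpow_add]
  rw [show (-c) + c = 0 by ring, zpow_zero, Equiv.Perm.one_apply]

end Aux17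

namespace Aux17
variable {Q : Type*} [InvQdl Q] (a b : Q)

lemma gen_odd (ht : ∃ t : ℤ, Odd t ∧ e a b t = b) :
    ∃ k : ℕ, 0 < k ∧ Odd k ∧ ∀ n : ℤ, e a b n = b ↔ (k:ℤ) ∣ n := by
  obtain ⟨t, hodd, hbt⟩ := ht
  obtain ⟨d, hd⟩ := exists_gen a b
  have hdt : d ∣ t := (hd t).1 hbt
  have ht0 : t ≠ 0 := by
    rintro rfl
    obtain ⟨v, hv⟩ := hodd
    omega
  have hd0 : d ≠ 0 := by rintro rfl; exact ht0 (zero_dvd_iff.mp hdt)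
  refine ⟨d.natAbs, Int.natAbs_pos.mpr hd0, ?_, ?_⟩
  · have hdodd : Odd d := by
      rcases Int.even_or_odd d with he | ho
      · exfalso
        obtain ⟨v, rfl⟩ := hdt
        exact ((Int.not_odd_iff_even.mpr · ) ((Int.even_mul).2 (Or.inl he))) hodd
      · exact ho
    exact Int.natAbs_odd.mpr hdodd
  · intro n
    rw [hd n, Int.natAbs_dvd]

lemma e_eq_iff {k : ℕ} (hodd : Odd k) (hgen : ∀ n : ℤ, e a b n = b ↔ (k:ℤ) ∣ n)
    (n m : ℤ) : e a b n = e a b m ↔ (k:ℤ) ∣ (n - m) := by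
  constructor
  · intro h
    have h1 : (k:ℤ) ∣ 2*(n-m) :=
      (hgen _).1 (e_two_mul_of_gpow a b (g_zpow_diff a b h))
    have h2 : k ∣ (2*(n-m)).natAbs := by
      rw [← Int.natAbs_natCast k]
      exact Int.natAbs_dvd_natAbs.mpr h1
    rw [Int.natAbs_mul] at h2
    have hcop : Nat.Coprime k 2 := Nat.coprime_two_right.mpr hodd
    have h3 : k ∣ (n-m).natAbs := hcop.dvd_of_dvd_mul_left h2
    exact Int.dvd_natAbs.mp (Int.natCast_dvd_natCast.mpr h3)
  · rintro ⟨c, hc⟩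
    have hkodd : Odd ((k:ℕ):ℤ) := Int.odd_coe_nat k |>.mpr hodd
    have hkb : e a b ((k:ℕ):ℤ) = b := (hgen _).2 dvd_rfl
    have hn : n = m + c * ((k:ℕ):ℤ) := by linear_combination hc
    rw [hn, e_period_mul a b hkodd hkb]

end Aux17

namespace Aux17
variable {Q : Type*} [InvQdl Q] (a b : Q)

lemma final_pack (m' : ℕ)
    (hgen : ∀ n : ℤ, e a b n = b ↔ ((2*m'+1 : ℕ):ℤ) ∣ n) :
    (Sg ({a, b} : Set Q)).Finite ∧
    (∀ c ∈ Sg ({a, b} : Set Q),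
      Set.BijOn (fun y => mul y c) (Sg {a, b}) (Sg {a, b})) ∧
    Nat.card ↥(Sg ({a, b} : Set Q)) = 2*m'+1 ∧
    ∃ f : ZMod (2*m'+1) → Q, Function.Injective f ∧
      Set.range f = (Sg ({a, b} : Set Q)) ∧
      ∀ x y : ZMod (2*m'+1), f (2*x - y) = mul (f x) (f y) := by
  set N : ℕ := 2*m'+1 with hN
  haveI : NeZero N := ⟨by omega⟩
  have hodd : Odd N := ⟨m', by omega⟩
  have hEqIff := e_eq_iff a b hodd hgen
  have hvz : ∀ x : ZMod N, (((x.val : ℤ)) : ZMod N) = x := fun x => by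
    push_cast
    exact ZMod.natCast_rightInverse x
  have hdvd_of_eqcast : ∀ u v : ℤ, ((u : ZMod N) = (v : ZMod N)) → (N:ℤ) ∣ u - v := by
    intro u v h
    have h1 := (ZMod.intCast_eq_intCast_iff u v N).1 h
    exact Int.ModEq.dvd h1.symm
  set f : ZMod N → Q := fun x => e a b (x.val : ℤ) with hf
  have hfc : ∀ n : ℤ, f ((n : ZMod N)) = e a b n := by
    intro n
    apply (hEqIff _ _).2
    exact hdvd_of_eqcast _ _ (by rw [hvz])
  have hinj : Function.Injective f := by
    intro x y h
    have hd := (hEqIff _ _).1 h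
    have hd2 : ((x.val : ℤ) : ZMod N) = ((y.val : ℤ) : ZMod N) := by
      rw [ZMod.intCast_eq_intCast_iff]
      exact Int.ModEq.symm (Int.modEq_iff_dvd.mpr hd)
    rwa [hvz, hvz] at hd2
  have hrange : Set.range f = Sg ({a, b} : Set Q) := by
    rw [Sg_pair_eq_range]
    apply subset_antisymm
    · rintro _ ⟨x, rfl⟩; exact ⟨(x.val : ℤ), rfl⟩
    · rintro _ ⟨n, rfl⟩; exact ⟨(n : ZMod N), hfc n⟩
  have haffine : ∀ x y : ZMod N, f (2*x - y) = mul (f x) (f y) := by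
    intro x y
    rw [show mul (f x) (f y) = e a b (2*(x.val:ℤ) - (y.val:ℤ)) from e_mul a b _ _]
    apply (hEqIff _ _).2
    apply hdvd_of_eqcast
    push_cast
    rw [ZMod.natCast_rightInverse x, ZMod.natCast_rightInverse y,
      ZMod.natCast_rightInverse (2*x-y)]
  have hfin : (Sg ({a, b} : Set Q)).Finite := by
    rw [← hrange]; exact Set.finite_range f
  have hcard : Nat.card ↥(Sg ({a, b} : Set Q)) = N := by
    rw [← hrange, Nat.card_range_of_injective hinj, Nat.card_zmod]
  -- the inverse of 2
  have hNz : ((N : ℕ) : ZMod N) = 0 := ZMod.natCast_self N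
  set w : ZMod N := ((m'+1 : ℕ) : ZMod N) with hw
  have h21 : 2 * w = 1 := by
    rw [hw]
    push_cast
    rw [hN] at hNz
    push_cast at hNz
    linear_combination hNz
  refine ⟨hfin, ?_, hcard, f, hinj, hrange, haffine⟩
  intro c hc
  rw [← hrange] at hc
  obtain ⟨z, rfl⟩ := hc
  refine ⟨?_, ?_, ?_⟩
  · intro y hy
    rw [← hrange] at hy ⊢
    obtain ⟨x, rfl⟩ := hy
    exact ⟨2*x - z, haffine x z⟩
  · intro y1 h1 y2 h2 heq
    rw [← hrange] at h1 h2
    obtain ⟨x1, rfl⟩ := h1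
    obtain ⟨x2, rfl⟩ := h2
    simp only [← haffine] at heq
    have h3 := hinj heq
    have h4 : 2*x1 = 2*x2 := by linear_combination h3
    exact congrArg f (by linear_combination w * h4 + (x2 - x1) * h21)
  · intro y hy
    rw [← hrange] at hy
    obtain ⟨u, rfl⟩ := hy
    refine ⟨f (w*(u+z)), by rw [← hrange]; exact ⟨_, rfl⟩, ?_⟩
    show mul (f (w*(u+z))) (f z) = f u
    rw [← haffine]
    congr 1
    linear_combination (u + z) * h21

end Aux17


open Aux17 in
/-- `Sg(a,b)` is connected iff `ord_{a,b}` is finite and odd; in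
that case `Sg(a,b)` is a finite latin quandle of odd order, isomorphic to
`Aff(ℤ_{2m+1}, -1)` for some `m`. -/
theorem stmt17 {Q : Type*} [InvQdl Q] (a b : Q) :
    (ConnectedSet (Sg {a, b}) ↔
      ∃ k : ℕ, 0 < k ∧ Odd k ∧ cyc a b k = b ∧
        ∀ j : ℕ, 0 < j → cyc a b j = b → k ≤ j) ∧
    (ConnectedSet (Sg {a, b}) →
      (Sg {a, b} : Set Q).Finite ∧
      (∀ c ∈ Sg {a, b}, Set.BijOn (fun y => mul y c) (Sg {a, b}) (Sg {a, b})) ∧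
      ∃ m : ℕ, Nat.card ↥(Sg {a, b} : Set Q) = 2 * m + 1 ∧
        ∃ e : ZMod (2 * m + 1) → Q, Function.Injective e ∧
          Set.range e = (Sg {a, b} : Set Q) ∧
          ∀ x y : ZMod (2 * m + 1), e (2 * x - y) = mul (e x) (e y)) := by
  constructor
  · constructor
    · intro hconn
      obtain ⟨k, hk0, hkodd, hkgen⟩ := gen_odd a b (odd_of_conn a b hconn)
      refine ⟨k, hk0, hkodd, ?_, ?_⟩
      · rw [cyc_eq_e]
        exact (hkgen k).2 dvd_rfl
      · intro j hj hcyc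
        rw [cyc_eq_e] at hcyc
        have h1 := (hkgen j).1 hcyc
        have h2 : (k:ℤ) ≤ (j:ℤ) := Int.le_of_dvd (by exact_mod_cast hj) h1
        exact_mod_cast h2
    · rintro ⟨k, hk0, hkodd, hkcyc, -⟩
      rw [cyc_eq_e] at hkcyc
      exact conn_of_odd a b ((Int.odd_coe_nat k).mpr hkodd) hkcyc
  · intro hconn
    obtain ⟨k, hk0, hkodd, hkgen⟩ := gen_odd a b (odd_of_conn a b hconn)
    obtain ⟨m', hm'⟩ := hkodd
    have hk' : k = 2*m' + 1 := by omega
    subst hk'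
    obtain ⟨hfin, hlatin, hcard, f, hinj, hrange, haffine⟩ := final_pack a b m' hkgen
    exact ⟨hfin, hlatin, m', hcard, f, hinj, hrange, haffine⟩
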